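/- Let f : X → ℝ have sensitivity Δ, i.e., |f(x) − f(x')| ≤ Δ for all x, x' ∈ X. Then the Laplace mechanism M(x) = f(x) + Lap(Δ/ε), where Lap(b) has density (1/2b)·exp(−|t|/b), satisfies: for all x, x' ∈ X and all measurable S ⊆ ℝ, P[M(x) ∈ S] ≤ e^ε · P[M(x') ∈ S]. -/

import Mathlib

open MeasureTheory

/-- The Laplace distribution with scale `b`, given by density (1/(2b))·exp(-|t|/b). -/
noncomputable def laplaceMeasure (b : ℝ) : Measure ℝ :=
  volume.withDensity (fun t => ENNReal.ofReal (1 / (2 * b) * Real.exp (-|t| / b)))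

lemma laplace_map_apply (b : ℝ) (c : ℝ) (S : Set ℝ) (hS : MeasurableSet S) :
    Measure.map (fun t => c + t) (laplaceMeasure b) S
      = ∫⁻ s in S, ENNReal.ofReal (1 / (2 * b) * Real.exp (-|s - c| / b)) := by
  rw [Measure.map_apply (measurable_const_add c) hS, laplaceMeasure,
    withDensity_apply _ ((measurable_const_add c) hS)]
  have hemb : MeasurableEmbedding (fun s : ℝ => s - c) :=
    (Homeomorph.subRight c).measurableEmbedding
  have hmp : MeasurePreserving (fun s : ℝ => s - c) volume volume :=
    measurePreserving_sub_right volume c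
  have heq := hmp.setLIntegral_comp_emb hemb
    (fun t => ENNReal.ofReal (1 / (2 * b) * Real.exp (-|t| / b))) S
  have himg : (fun s : ℝ => s - c) '' S = (fun t : ℝ => c + t) ⁻¹' S := by
    ext t
    constructor
    · rintro ⟨s, hs, rfl⟩
      simpa using hs
    · intro ht
      exact ⟨c + t, ht, by ring⟩
  rw [himg] at heq
  rw [← heq]

/-- The Laplace mechanism for a sensitivity-Δ function is (ε,0)-differentially private. -/
theorem laplace_mechanism_private {X : Type*} (ε Δ : ℝ) (hε : 0 < ε) (hΔ : 0 < Δ)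
    (f : X → ℝ) (hf : ∀ x x' : X, |f x - f x'| ≤ Δ)
    (M : X → Measure ℝ)
    (hM : ∀ x, M x = Measure.map (fun t => f x + t) (laplaceMeasure (Δ / ε))) :
    ∀ x x' : X, ∀ S : Set ℝ, MeasurableSet S →
      M x S ≤ ENNReal.ofReal (Real.exp ε) * M x' S := by
  intro x x' S hS
  set b := Δ / ε with hb
  have hbpos : 0 < b := div_pos hΔ hε
  rw [hM x, hM x', laplace_map_apply b (f x) S hS, laplace_map_apply b (f x') S hS]
  have key : ∀ s : ℝ,
      ENNReal.ofReal (1 / (2 * b) * Real.exp (-|s - f x| / b))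
        ≤ ENNReal.ofReal (Real.exp ε) *
          ENNReal.ofReal (1 / (2 * b) * Real.exp (-|s - f x'| / b)) := by
    intro s
    rw [← ENNReal.ofReal_mul (Real.exp_pos ε).le]
    apply ENNReal.ofReal_le_ofReal
    rw [mul_left_comm]
    apply mul_le_mul_of_nonneg_left _ (by positivity)
    rw [← Real.exp_add]
    apply Real.exp_le_exp.2
    have h1 : |s - f x'| - |s - f x| ≤ Δ := by
      have := abs_sub_abs_le_abs_sub (s - f x') (s - f x)
      have h2 : |s - f x' - (s - f x)| = |f x - f x'| := by
        rw [show s - f x' - (s - f x) = f x - f x' by ring]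
      linarith [hf x x']
    have hΔb : Δ / b = ε := by
      field_simp [hb]
      rw [hb, div_mul_cancel₀ Δ hε.ne']
    rw [← hΔb, ← add_div]
    exact (div_le_div_iff_of_pos_right hbpos).2 (by linarith)
  calc ∫⁻ s in S, ENNReal.ofReal (1 / (2 * b) * Real.exp (-|s - f x| / b))
      ≤ ∫⁻ s in S, ENNReal.ofReal (Real.exp ε) *
          ENNReal.ofReal (1 / (2 * b) * Real.exp (-|s - f x'| / b)) :=
        lintegral_mono fun s => key s
    _ = ENNReal.ofReal (Real.exp ε) *
          ∫⁻ s in S, ENNReal.ofReal (1 / (2 * b) * Real.exp (-|s - f x'| / b)) :=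
        lintegral_const_mul' _ _ ENNReal.ofReal_ne_top
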